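/- Let x : ℤ → ℤ be a sequence of integers with x_k ≥ -1 for every k ∈ ℤ. For every integer i, the number of children of i in the record graph of x is finite and equals x_{i-1} + 1 - max(t_x(i), 0); that is, it equals x_{i-1} + 1 when t_x(i) = -1, and equals x_{i-1} + 1 - t_x(i) when t_x(i) ≥ 0. -/
import Mathlib


/-- The record map of an integer-valued sequence `x : ℤ → ℤ`: `recordMap x i` is the least
`n > i` such that `∑_{l=i}^{n-1} x l ≥ 0` if such an `n` exists, and `i` otherwise. -/
noncomputable def recordMap (x : ℤ → ℤ) (i : ℤ) : ℤ := by
  classical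
  exact if ∃ n, i < n ∧ 0 ≤ ∑ l ∈ Finset.Ico i n, x l then
    sInf {n : ℤ | i < n ∧ 0 ≤ ∑ l ∈ Finset.Ico i n, x l}
  else i

/-- The type of `i` for the sequence `x`: `t_x(i) = min { max (y(m,i), -1) : m < i }`,
where `y(m,i) = ∑_{l=m}^{i-1} x l`. -/
noncomputable def typeOf (x : ℤ → ℤ) (i : ℤ) : ℤ :=
  sInf {v : ℤ | ∃ m < i, v = max (∑ l ∈ Finset.Ico m i, x l) (-1)}

/-- For a skip-free to the left sequence `x` (`x k ≥ -1` for all `k`) and every integer `i`,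
the set of children of `i` in the record graph of `x` is finite and its cardinality equals
`x (i-1) + 1 - max (t_x(i), 0)`: it equals `x (i-1) + 1` when `t_x(i) = -1` and
`x (i-1) + 1 - t_x(i)` when `t_x(i) ≥ 0`. -/
theorem card_children_eq_sub_type (x : ℤ → ℤ) (hx : ∀ k : ℤ, -1 ≤ x k) (i : ℤ) :
    {j : ℤ | j ≠ i ∧ recordMap x j = i}.Finite ∧
      ({j : ℤ | j ≠ i ∧ recordMap x j = i}.ncard : ℤ)
        = x (i - 1) + 1 - max (typeOf x i) 0 := by
  classical
  set s : ℤ → ℤ := fun m => ∑ l ∈ Finset.Ico m i, x l with hs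
  have hsi : s i = 0 := by simp [hs]
  have hsplit : ∀ j n : ℤ, j ≤ n → n ≤ i →
      ∑ l ∈ Finset.Ico j n, x l = s j - s n := by
    intro j n hjn hni
    have h := Finset.sum_union (f := x) (Finset.Ico_disjoint_Ico_consecutive j n i)
    rw [Finset.Ico_union_Ico_eq_Ico hjn hni] at h
    simp only [hs]
    linarith
  have hstep : ∀ m : ℤ, m < i → s m = x m + s (m + 1) := by
    intro m hm
    have h1 := hsplit m (m + 1) (by omega) (by omega)
    have h2 : ∑ l ∈ Finset.Ico m (m + 1), x l = x m := by
      rw [show Finset.Ico m (m + 1) = {m} by ext k; simp; omega]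
      simp
    omega
  have hb : s (i - 1) = x (i - 1) := by
    have h := hstep (i - 1) (by omega)
    rw [show i - 1 + 1 = i by ring, hsi] at h
    omega
  -- characterization of children
  have hchild : ∀ j : ℤ, (j ≠ i ∧ recordMap x j = i) ↔
      (j < i ∧ 0 ≤ s j ∧ ∀ n, j < n → n < i → s j < s n) := by
    intro j
    constructor
    · rintro ⟨hne, hr⟩
      unfold recordMap at hr
      split_ifs at hr with hP
      · have hbdd : BddBelow {n : ℤ | j < n ∧ 0 ≤ ∑ l ∈ Finset.Ico j n, x l} :=
          ⟨j, fun n hn => le_of_lt hn.1⟩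
        have hmem := Int.csInf_mem hP hbdd
        have hmem2 : j < i ∧ 0 ≤ ∑ l ∈ Finset.Ico j i, x l := by
          rw [← hr]; exact hmem
        obtain ⟨hji, hsum⟩ := hmem2
        have h0 : 0 ≤ s j := by
          have := hsplit j i (le_of_lt hji) le_rfl
          omega
        refine ⟨hji, h0, ?_⟩
        intro n hn hni
        by_contra hcon
        push_neg at hcon
        have hnS : n ∈ {n : ℤ | j < n ∧ 0 ≤ ∑ l ∈ Finset.Ico j n, x l} := by
          refine ⟨hn, ?_⟩
          rw [hsplit j n (le_of_lt hn) (le_of_lt hni)]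
          omega
        have := csInf_le hbdd hnS
        omega
      · exact absurd hr hne
    · rintro ⟨hji, h0, hmin⟩
      have hiS : i ∈ {n : ℤ | j < n ∧ 0 ≤ ∑ l ∈ Finset.Ico j n, x l} := by
        refine ⟨hji, ?_⟩
        rw [hsplit j i hji.le le_rfl]
        omega
      refine ⟨by omega, ?_⟩
      unfold recordMap
      rw [if_pos ⟨i, hiS⟩]
      apply le_antisymm
      · exact csInf_le ⟨j, fun n hn => le_of_lt hn.1⟩ hiS
      · apply le_csInf ⟨i, hiS⟩
        intro n hn
        by_contra hni
        push_neg at hni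
        have h1 := hmin n hn.1 hni
        have h2 := hsplit j n hn.1.le hni.le
        have h3 := hn.2
        omega
  -- facts about typeOf
  have hbt : BddBelow {v : ℤ | ∃ m < i, v = max (∑ l ∈ Finset.Ico m i, x l) (-1)} := by
    refine ⟨-1, ?_⟩
    rintro v ⟨m, _, rfl⟩
    exact le_max_right _ _
  have hnt : Set.Nonempty {v : ℤ | ∃ m < i, v = max (∑ l ∈ Finset.Ico m i, x l) (-1)} :=
    ⟨max (∑ l ∈ Finset.Ico (i - 1) i, x l) (-1), i - 1, by omega, rfl⟩
  have ht1 : ∃ m < i, typeOf x i = max (s m) (-1) := Int.csInf_mem hnt hbt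
  have ht2 : ∀ m, m < i → typeOf x i ≤ max (s m) (-1) := fun m hm =>
    csInf_le hbt ⟨m, hm, rfl⟩
  set t : ℤ := typeOf x i with htdef
  set a : ℤ := max t 0 with hadef
  set C : Set ℤ := {j : ℤ | j ≠ i ∧ recordMap x j = i} with hC
  -- t ≤ s (i-1)
  have htb : t ≤ x (i - 1) := by
    have h1 := ht2 (i - 1) (by omega)
    rw [hb] at h1
    have h2 := hx (i - 1)
    omega
  -- maps to
  have hmaps : ∀ j ∈ C, s j ∈ Set.Icc a (x (i - 1)) := by
    intro j hj
    rw [hC, Set.mem_setOf_eq, hchild j] at hj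
    obtain ⟨hji, h0, hmin⟩ := hj
    constructor
    · have h1 := ht2 j hji
      have h2 : max (s j) (-1) = s j := by omega
      rw [h2] at h1
      omega
    · rcases eq_or_lt_of_le (show j ≤ i - 1 by omega) with h | h
      · rw [h, hb]
      · have := hmin (i - 1) (by omega) (by omega)
        rw [hb] at this
        omega
  -- injective on C
  have hinj : Set.InjOn s C := by
    intro j hj j' hj' heq
    rw [hC, Set.mem_setOf_eq, hchild j] at hj
    rw [hC, Set.mem_setOf_eq, hchild j'] at hj'
    by_contra hne
    rcases lt_trichotomy j j' with h | h | h
    · have := hj.2.2 j' h hj'.1; omega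
    · exact hne h
    · have := hj'.2.2 j h hj.1; omega
  -- surjective onto Icc
  have hsurj : ∀ v ∈ Set.Icc a (x (i - 1)), ∃ j ∈ C, s j = v := by
    intro v hv
    obtain ⟨hva, hvb⟩ := hv
    obtain ⟨m0, hm0i, hm0⟩ := ht1
    have hm0v : s m0 ≤ v := by
      have : s m0 ≤ max (s m0) (-1) := le_max_left _ _
      omega
    obtain ⟨j, ⟨hji, hjv⟩, hjmax⟩ := Int.exists_greatest_of_bdd
      (P := fun m => m < i ∧ s m ≤ v) ⟨i, fun z hz => le_of_lt hz.1⟩ ⟨m0, hm0i, hm0v⟩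
    have hsjv : s j = v := by
      rcases eq_or_lt_of_le (show j ≤ i - 1 by omega) with h | h
      · rw [h, hb]; rw [h, hb] at hjv; omega
      · have hj1 : ¬ (j + 1 < i ∧ s (j + 1) ≤ v) := fun hcon => by
          have := hjmax (j + 1) hcon; omega
        push_neg at hj1
        have h1 := hj1 (by omega)
        have h2 := hstep j hji
        have h3 := hx j
        omega
    refine ⟨j, ?_, hsjv⟩
    rw [hC, Set.mem_setOf_eq, hchild j]
    refine ⟨hji, by omega, ?_⟩
    intro n hn hni
    by_contra hcon
    push_neg at hcon
    have := hjmax n ⟨hni, by omega⟩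
    omega
  have himg : s '' C = Set.Icc a (x (i - 1)) := by
    apply Set.Subset.antisymm
    · rintro _ ⟨j, hj, rfl⟩
      exact hmaps j hj
    · intro v hv
      obtain ⟨j, hj, hjv⟩ := hsurj v hv
      exact ⟨j, hj, hjv⟩
  have hfin : C.Finite := by
    apply Set.Finite.of_finite_image _ hinj
    rw [himg]
    exact Set.finite_Icc _ _
  refine ⟨hfin, ?_⟩
  have hcard : C.ncard = (Set.Icc a (x (i - 1))).ncard := by
    rw [← himg, Set.ncard_image_of_injOn hinj]
  have hab : a ≤ x (i - 1) + 1 := by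
    have h1 := hx (i - 1)
    rw [hadef]
    rcases le_total t 0 with h | h
    · rw [max_eq_right h]; omega
    · rw [max_eq_left h]; omega
  rw [hcard, ← Finset.coe_Icc, Set.ncard_coe_finset, Int.card_Icc_of_le _ _ hab]
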